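/- Let A ∈ ℝ^{n×n} be invertible, let B ∈ ℝ^{n×n}, b ∈ ℝⁿ, θ ∈ [0,1), and let Ω ∈ ℝ^{n×n} be such that A + Ω is invertible. Suppose F(x*) = 0 and ‖A^{-1}‖ < 1/[‖B‖ + 2‖Ω‖ + θ(‖Ω+A‖ + ‖B‖ + ‖Ω‖)]. Then any sequence {x^k} in ℝⁿ satisfying ‖(Ω+A)x^{k+1} − [Ω x^k + B|x^k| + b]‖ ≤ θ‖F(x^k)‖ for all k ≥ 0 converges linearly to x* from any starting point x^0. -/

import Mathlib

open Matrix Filter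

/-- Componentwise absolute value of a vector in Euclidean space. -/
noncomputable def vabs {n : ℕ} (x : EuclideanSpace ℝ (Fin n)) : EuclideanSpace ℝ (Fin n) :=
  WithLp.toLp 2 (fun i => |x i|)

/-- A matrix acting on Euclidean space (so that vector norms are the Euclidean 2-norm). -/
noncomputable def mulV {n : ℕ} (M : Matrix (Fin n) (Fin n) ℝ) (x : EuclideanSpace ℝ (Fin n)) :
    EuclideanSpace ℝ (Fin n) :=
  Matrix.toEuclideanCLM (𝕜 := ℝ) M x

/-- Spectral norm of a real matrix: the operator norm induced by the Euclidean vector norm. -/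
noncomputable def spec {n : ℕ} (M : Matrix (Fin n) (Fin n) ℝ) : ℝ :=
  ‖Matrix.toEuclideanCLM (𝕜 := ℝ) M‖

/-- The GAVE residual function `F(x) = A x − B |x| − b`. -/
noncomputable def gaveF {n : ℕ} (A B : Matrix (Fin n) (Fin n) ℝ)
    (b : EuclideanSpace ℝ (Fin n)) (x : EuclideanSpace ℝ (Fin n)) : EuclideanSpace ℝ (Fin n) :=
  mulV A x - mulV B (vabs x) - b

/-- The AVE residual function `A x − |x| − b` (the GAVE with `B = I`). -/
noncomputable def aveF {n : ℕ} (A : Matrix (Fin n) (Fin n) ℝ)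
    (b : EuclideanSpace ℝ (Fin n)) (x : EuclideanSpace ℝ (Fin n)) : EuclideanSpace ℝ (Fin n) :=
  mulV A x - vabs x - b

/-- A sequence converges linearly to `xs`: the distances to `xs` contract by a fixed
factor `c < 1` at every step, and the sequence tends to `xs`. -/
def ConvergesLinearlyTo {n : ℕ} (x : ℕ → EuclideanSpace ℝ (Fin n))
    (xs : EuclideanSpace ℝ (Fin n)) : Prop :=
  (∃ c : ℝ, 0 ≤ c ∧ c < 1 ∧ ∀ k : ℕ, ‖x (k + 1) - xs‖ ≤ c * ‖x k - xs‖) ∧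
    Tendsto x atTop (nhds xs)

lemma vabs_lip {n : ℕ} (x y : EuclideanSpace ℝ (Fin n)) : ‖vabs x - vabs y‖ ≤ ‖x - y‖ := by
  rw [EuclideanSpace.norm_eq, EuclideanSpace.norm_eq]
  apply Real.sqrt_le_sqrt
  apply Finset.sum_le_sum
  intro i _
  have h1 : (vabs x - vabs y) i = |x i| - |y i| := by
    simp [vabs]
  have h2 : (x - y) i = x i - y i := by simp
  rw [h1, h2]
  have h3 : ‖|x i| - |y i|‖ ≤ ‖x i - y i‖ := by
    simpa [Real.norm_eq_abs] using abs_abs_sub_abs_le_abs_sub (x i) (y i)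
  exact pow_le_pow_left₀ (norm_nonneg _) h3 2

lemma mulV_add {n : ℕ} (M N : Matrix (Fin n) (Fin n) ℝ) (x : EuclideanSpace ℝ (Fin n)) :
    mulV (M + N) x = mulV M x + mulV N x := by
  simp [mulV, map_add]

lemma mulV_sub {n : ℕ} (M : Matrix (Fin n) (Fin n) ℝ) (u v : EuclideanSpace ℝ (Fin n)) :
    mulV M (u - v) = mulV M u - mulV M v :=
  map_sub (Matrix.toEuclideanCLM (𝕜 := ℝ) M) u v

lemma mulV_norm_le {n : ℕ} (M : Matrix (Fin n) (Fin n) ℝ) (x : EuclideanSpace ℝ (Fin n)) :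
    ‖mulV M x‖ ≤ spec M * ‖x‖ :=
  (Matrix.toEuclideanCLM (𝕜 := ℝ) M).le_opNorm x

lemma mulV_inv_cancel {n : ℕ} {A : Matrix (Fin n) (Fin n) ℝ} (hA : IsUnit A)
    (v : EuclideanSpace ℝ (Fin n)) : mulV A⁻¹ (mulV A v) = v := by
  have h1 : A⁻¹ * A = 1 := nonsing_inv_mul A ((Matrix.isUnit_iff_isUnit_det A).mp hA)
  have : mulV A⁻¹ (mulV A v) = mulV (A⁻¹ * A) v := by
    simp [mulV, _root_.map_mul, ContinuousLinearMap.mul_apply]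
  rw [this, h1]
  simp [mulV, _root_.map_one]


theorem stmt5 {n : ℕ} (A B Ω : Matrix (Fin n) (Fin n) ℝ)
    (b : EuclideanSpace ℝ (Fin n)) (hA : IsUnit A) (θ : ℝ) (hθ0 : 0 ≤ θ) (hθ1 : θ < 1)
    (hinv : IsUnit (A + Ω))
    (xs : EuclideanSpace ℝ (Fin n)) (hxs : gaveF A B b xs = 0)
    (hcond : spec A⁻¹ <
      1 / (spec B + 2 * spec Ω + θ * (spec (Ω + A) + spec B + spec Ω)))
    (x : ℕ → EuclideanSpace ℝ (Fin n))
    (hx : ∀ k : ℕ, ‖mulV (Ω + A) (x (k + 1)) - (mulV Ω (x k) + mulV B (vabs (x k)) + b)‖ ≤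
      θ * ‖gaveF A B b (x k)‖) :
    ConvergesLinearlyTo x xs := by
  set a := spec A⁻¹ with ha
  have a0 : 0 ≤ a := norm_nonneg _
  set sB := spec B with hsB
  set sO := spec Ω with hsO
  set sT := spec (Ω + A) with hsT
  have sB0 : 0 ≤ sB := norm_nonneg _
  have sO0 : 0 ≤ sO := norm_nonneg _
  have sT0 : 0 ≤ sT := norm_nonneg _
  set T : ℝ := sT + sB + sO with hT
  have T0 : 0 ≤ T := by rw [hT]; linarith
  set S : ℝ := sB + 2 * sO + θ * T with hS
  have hSpos : 0 < S := by
    by_contra h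
    push_neg at h
    have h1 : 1 / S ≤ 0 := by
      rcases lt_or_eq_of_le h with h' | h'
      · exact le_of_lt (div_neg_of_pos_of_neg one_pos h')
      · rw [h']; simp
    linarith
  have haS : a * S < 1 := by
    rw [lt_div_iff₀ hSpos] at hcond; linarith
  set D : ℝ := sB + sO + θ * T with hD
  have D0 : 0 ≤ D := by rw [hD]; nlinarith [mul_nonneg hθ0 T0]
  have hden : 0 < 1 - a * sO := by
    nlinarith [mul_nonneg a0 sB0, mul_nonneg a0 (mul_nonneg hθ0 T0), mul_nonneg a0 sO0]
  set c : ℝ := a * D / (1 - a * sO) with hc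
  have hc0 : 0 ≤ c := div_nonneg (mul_nonneg a0 D0) hden.le
  have hc1 : c < 1 := by
    rw [hc, div_lt_one hden]; nlinarith
  have hAxs : mulV A xs = mulV B (vabs xs) + b := by
    have h := hxs
    unfold gaveF at h
    rw [sub_sub, sub_eq_zero] at h
    exact h
  have key : ∀ k, ‖x (k + 1) - xs‖ ≤ c * ‖x k - xs‖ := by
    intro k
    set e0 := x k - xs with he0
    set e1 := x (k + 1) - xs with he1
    have hB : ‖mulV B (vabs (x k) - vabs xs)‖ ≤ sB * ‖e0‖ :=
      le_trans (mulV_norm_le _ _) (mul_le_mul_of_nonneg_left (vabs_lip _ _) sB0)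
    have hO : ‖mulV Ω e0‖ ≤ sO * ‖e0‖ := mulV_norm_le _ _
    have hOA1 : ‖mulV (Ω + A) e0‖ ≤ sT * ‖e0‖ := mulV_norm_le _ _
    have hFid : gaveF A B b (x k)
        = mulV (Ω + A) e0 - mulV Ω e0 - mulV B (vabs (x k) - vabs xs) := by
      unfold gaveF
      rw [he0]
      simp only [mulV_sub, mulV_add, hAxs]
      abel
    have hF : ‖gaveF A B b (x k)‖ ≤ T * ‖e0‖ := by
      rw [hFid]
      have n1 := norm_sub_le (mulV (Ω + A) e0 - mulV Ω e0) (mulV B (vabs (x k) - vabs xs))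
      have n2 := norm_sub_le (mulV (Ω + A) e0) (mulV Ω e0)
      rw [hT]; linarith
    have hid2 : mulV (Ω + A) e1
        = (mulV (Ω + A) (x (k + 1)) - (mulV Ω (x k) + mulV B (vabs (x k)) + b))
          + (mulV Ω e0 + mulV B (vabs (x k) - vabs xs)) := by
      rw [he1, he0]
      simp only [mulV_sub, mulV_add, hAxs]
      abel
    have h1 : ‖mulV (Ω + A) e1‖ ≤ θ * (T * ‖e0‖) + (sO * ‖e0‖ + sB * ‖e0‖) := by
      rw [hid2]
      have n1 := norm_add_le
        (mulV (Ω + A) (x (k + 1)) - (mulV Ω (x k) + mulV B (vabs (x k)) + b))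
        (mulV Ω e0 + mulV B (vabs (x k) - vabs xs))
      have n2 := norm_add_le (mulV Ω e0) (mulV B (vabs (x k) - vabs xs))
      have hxk := hx k
      have n3 := mul_le_mul_of_nonneg_left hF hθ0
      linarith
    have h2 : ‖e1‖ ≤ a * ‖mulV A e1‖ := by
      conv_lhs => rw [← mulV_inv_cancel hA e1]
      exact mulV_norm_le _ _
    have h3 : ‖mulV A e1‖ ≤ ‖mulV (Ω + A) e1‖ + sO * ‖e1‖ := by
      have hid3 : mulV A e1 = mulV (Ω + A) e1 - mulV Ω e1 := by
        rw [mulV_add]; abel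
      rw [hid3]
      exact le_trans (norm_sub_le _ _) (by linarith [mulV_norm_le Ω e1])
    have h5 : ‖e1‖ ≤ a * θ * T * ‖e0‖ + a * sO * ‖e0‖ + a * sB * ‖e0‖ + a * sO * ‖e1‖ := by
      calc ‖e1‖ ≤ a * ‖mulV A e1‖ := h2
        _ ≤ a * (‖mulV (Ω + A) e1‖ + sO * ‖e1‖) := mul_le_mul_of_nonneg_left h3 a0
        _ ≤ a * ((θ * (T * ‖e0‖) + (sO * ‖e0‖ + sB * ‖e0‖)) + sO * ‖e1‖) :=
            mul_le_mul_of_nonneg_left (by linarith) a0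
        _ = a * θ * T * ‖e0‖ + a * sO * ‖e0‖ + a * sB * ‖e0‖ + a * sO * ‖e1‖ := by ring
    have h4 : (1 - a * sO) * ‖e1‖ ≤ a * D * ‖e0‖ := by
      have hexp : a * D * ‖e0‖
          = a * sB * ‖e0‖ + a * sO * ‖e0‖ + a * θ * T * ‖e0‖ := by rw [hD]; ring
      rw [hexp]
      linarith
    rw [hc, div_mul_eq_mul_div, le_div_iff₀ hden]
    linarith [h4]
  have geom : ∀ k, ‖x k - xs‖ ≤ c ^ k * ‖x 0 - xs‖ := by
    intro k
    induction k with
    | zero => simp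
    | succ k ih =>
      calc ‖x (k + 1) - xs‖ ≤ c * ‖x k - xs‖ := key k
        _ ≤ c * (c ^ k * ‖x 0 - xs‖) := mul_le_mul_of_nonneg_left ih hc0
        _ = c ^ (k + 1) * ‖x 0 - xs‖ := by ring
  refine ⟨⟨c, hc0, hc1, key⟩, ?_⟩
  rw [tendsto_iff_norm_sub_tendsto_zero]
  have h0 : Tendsto (fun k : ℕ => c ^ k * ‖x 0 - xs‖) atTop (nhds 0) := by
    have hp := tendsto_pow_atTop_nhds_zero_of_lt_one hc0 hc1
    simpa using hp.mul_const ‖x 0 - xs‖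
  exact squeeze_zero (fun k => norm_nonneg _) geom h0
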